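/- arXiv:1305.7087 — 2 statements merged into one kernel-verified Lean document; each statement's English description precedes it below -/
import Mathlib

section
/- Let β_ε be the smooth convex approximation of absolute value (ε β(r/ε)), and for a C² flux F: ℝ → ℝ with F' of polynomial growth define F^{β_ε}(a,b) = ∫_b^a β_ε'(σ - b) F'(σ) dσ. Then there exist a constant C and p ∈ ℕ such that for all a, b ∈ ℝ: |F^{β_ε}(a,b) − sign(a−b)(F(a) − F(b))| ≤ ε·C·(1 + |a|^p + |b|^p). -/
open Set intervalIntegral

/-- For the smooth convex approximation `β_ε (r) = ε β (r/ε)` of the absolute value and a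
`C²` flux `F` with `F'` of polynomial growth, the entropy flux
`F^{β_ε}(a,b) = ∫_b^a β_ε'(σ - b) F'(σ) dσ` satisfies
`|F^{β_ε}(a,b) − sign(a−b)(F a − F b)| ≤ ε C (1 + |a|^p + |b|^p)`. -/
theorem stmt2 (β : ℝ → ℝ)
    (hβC2 : ContDiff ℝ 2 β)
    (hβnn : ∀ r, 0 ≤ β r)
    (hβconv : ConvexOn ℝ Set.univ β)
    (hβ0 : β 0 = 0)
    (hβeven : ∀ r, β (-r) = β r)
    (hdneg : ∀ r : ℝ, r ≤ -1 → deriv β r = -1)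
    (hdpos : ∀ r : ℝ, 1 ≤ r → deriv β r = 1)
    (hdmid : ∀ r : ℝ, |r| ≤ 1 → |deriv β r| ≤ 1)
    (F : ℝ → ℝ) (hF : ContDiff ℝ 2 F)
    (C₀ : ℝ) (p₀ : ℕ) (hF' : ∀ r : ℝ, |deriv F r| ≤ C₀ * (1 + |r| ^ p₀)) :
    ∃ (C : ℝ) (p : ℕ), ∀ ε : ℝ, 0 < ε → ∀ a b : ℝ,
      |(∫ σ in b..a, deriv (fun s : ℝ => ε * β (s / ε)) (σ - b) * deriv F σ)
          - Real.sign (a - b) * (F a - F b)|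
        ≤ ε * C * (1 + |a| ^ p + |b| ^ p) := by
  classical
  have hC₀ : 0 ≤ C₀ := by
    have h := hF' 0
    have h1 : (0:ℝ) ≤ |(0:ℝ)| ^ p₀ := by positivity
    nlinarith [abs_nonneg (deriv F 0)]
  have hβ'cont : Continuous (deriv β) := hβC2.continuous_deriv one_le_two
  have hF'cont : Continuous (deriv F) := hF.continuous_deriv one_le_two
  have hFdiff : Differentiable ℝ F := hF.differentiable two_ne_zero
  have hβ'bd : ∀ r : ℝ, |deriv β r| ≤ 1 := by
    intro r
    rcases le_or_gt (|r|) 1 with h | h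
    · exact hdmid r h
    · rcases lt_abs.mp h with h' | h'
      · rw [hdpos r h'.le]; norm_num
      · rw [hdneg r (by linarith)]; norm_num
  refine ⟨2 * C₀, p₀, ?_⟩
  intro ε hε a b
  have hεne : ε ≠ 0 := hε.ne'
  have hderiv : ∀ r : ℝ, deriv (fun s : ℝ => ε * β (s / ε)) r = deriv β (r / ε) := by
    intro r
    have hb : HasDerivAt β (deriv β (r / ε)) (r / ε) :=
      ((hβC2.differentiable two_ne_zero) (r / ε)).hasDerivAt
    have h1 : HasDerivAt (fun s : ℝ => β (s / ε)) (deriv β (r / ε) * (1 / ε)) r :=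
      hb.comp r ((hasDerivAt_id r).div_const ε)
    have h2 := h1.const_mul ε
    rw [h2.deriv]
    field_simp
  have hI : (∫ σ in b..a, deriv (fun s : ℝ => ε * β (s / ε)) (σ - b) * deriv F σ)
      = ∫ σ in b..a, deriv β ((σ - b) / ε) * deriv F σ := by
    apply intervalIntegral.integral_congr
    intro σ _
    show deriv (fun s : ℝ => ε * β (s / ε)) (σ - b) * deriv F σ
        = deriv β ((σ - b) / ε) * deriv F σ
    rw [hderiv]
  rw [hI]
  set g : ℝ → ℝ := fun σ => deriv β ((σ - b) / ε) * deriv F σ with hg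
  have hgcont : Continuous g := by
    apply Continuous.mul _ hF'cont
    exact hβ'cont.comp ((continuous_id.sub continuous_const).div_const ε)
  have hgint : ∀ u v : ℝ, IntervalIntegrable g MeasureTheory.volume u v :=
    fun u v => hgcont.intervalIntegrable u v
  have hF'int : ∀ u v : ℝ, IntervalIntegrable (deriv F) MeasureTheory.volume u v :=
    fun u v => hF'cont.intervalIntegrable u v
  have hFTC : ∀ u v : ℝ, (∫ σ in u..v, deriv F σ) = F v - F u := by
    intro u v
    exact intervalIntegral.integral_deriv_eq_sub (fun x _ => hFdiff x) (hF'int u v)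
  set M : ℝ := 2 * C₀ * (1 + |a| ^ p₀ + |b| ^ p₀) with hM
  have hMnn : 0 ≤ M := by
    apply mul_nonneg (by linarith)
    positivity
  have hbd : ∀ (t : ℝ), |t| ≤ 1 → ∀ σ : ℝ, min a b ≤ σ → σ ≤ max a b →
      |(deriv β ((σ - b) / ε) - t) * deriv F σ| ≤ M := by
    intro t ht σ h1 h2
    have hσ : |σ| ≤ max |a| |b| := by
      rcases le_total a b with hab | hab
      · rw [min_eq_left hab] at h1; rw [max_eq_right hab] at h2
        refine abs_le.mpr ⟨?_, ?_⟩
        · linarith [neg_abs_le a, le_max_left |a| |b|]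
        · linarith [le_abs_self b, le_max_right |a| |b|]
      · rw [min_eq_right hab] at h1; rw [max_eq_left hab] at h2
        refine abs_le.mpr ⟨?_, ?_⟩
        · linarith [neg_abs_le b, le_max_right |a| |b|]
        · linarith [le_abs_self a, le_max_left |a| |b|]
    have hσp : |σ| ^ p₀ ≤ |a| ^ p₀ + |b| ^ p₀ := by
      have h4 := pow_le_pow_left₀ (abs_nonneg σ) hσ p₀
      rcases max_cases (|a|) (|b|) with ⟨he, _⟩ | ⟨he, _⟩ <;> rw [he] at h4 <;>
        nlinarith [pow_nonneg (abs_nonneg a) p₀, pow_nonneg (abs_nonneg b) p₀]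
    have hβt : |deriv β ((σ - b) / ε) - t| ≤ 2 := by
      have h5 := abs_le.mp (hβ'bd ((σ - b) / ε))
      have h6 := abs_le.mp ht
      rw [abs_le]; constructor <;> linarith
    rw [abs_mul]
    calc |deriv β ((σ - b) / ε) - t| * |deriv F σ|
        ≤ 2 * (C₀ * (1 + |a| ^ p₀ + |b| ^ p₀)) := by
          apply mul_le_mul hβt _ (abs_nonneg _) (by norm_num)
          exact le_trans (hF' σ) (by nlinarith)
      _ = M := by rw [hM]; ring
  rcases lt_trichotomy a b with hab | hab | hab
  · -- a < b
    set c : ℝ := max a (b - ε) with hc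
    have hcb : c ≤ b := max_le hab.le (by linarith)
    have hac : a ≤ c := le_max_left _ _
    have hbc : b - ε ≤ c := le_max_right _ _
    have hsplit : (∫ σ in b..a, g σ) = (∫ σ in b..c, g σ) + ∫ σ in c..a, g σ :=
      (intervalIntegral.integral_add_adjacent_intervals (hgint b c) (hgint c a)).symm
    have htail : (∫ σ in c..a, g σ) = F c - F a := by
      rcases le_or_gt (b - ε) a with h | h
      · have hca : c = a := max_eq_left h
        rw [hca, intervalIntegral.integral_same]; simp
      · have hceq : c = b - ε := max_eq_right h.le
        have heq : (∫ σ in c..a, g σ) = ∫ σ in c..a, -deriv F σ := by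
          apply intervalIntegral.integral_congr
          intro σ hσ
          rw [Set.uIcc_comm, Set.uIcc_of_le hac] at hσ
          have h1 : (σ - b) / ε ≤ -1 := by
            rw [div_le_iff₀ hε]
            have : σ ≤ c := hσ.2
            rw [hceq] at this
            linarith
          show deriv β ((σ - b) / ε) * deriv F σ = -deriv F σ
          rw [hdneg _ h1]; ring
        rw [heq, intervalIntegral.integral_neg, hFTC]
        ring
    have hkey : (∫ σ in b..a, g σ) - Real.sign (a - b) * (F a - F b)
        = ∫ σ in b..c, (g σ + deriv F σ) := by
      rw [hsplit, htail, Real.sign_of_neg (by linarith : a - b < 0),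
        intervalIntegral.integral_add (hgint b c) (hF'int b c), hFTC]
      ring
    rw [hkey]
    have hbound : ‖∫ σ in b..c, (g σ + deriv F σ)‖ ≤ M * |c - b| := by
      apply intervalIntegral.norm_integral_le_of_norm_le_const
      intro σ hσ
      rw [Set.uIoc_comm, Set.uIoc_of_le hcb] at hσ
      have he : g σ + deriv F σ = (deriv β ((σ - b) / ε) - (-1)) * deriv F σ := by
        show deriv β ((σ - b) / ε) * deriv F σ + deriv F σ = _
        ring
      rw [Real.norm_eq_abs, he]
      apply hbd (-1) (by norm_num) σ
      · have : min a b = a := min_eq_left hab.le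
        linarith [hσ.1]
      · have : max a b = b := max_eq_right hab.le
        linarith [hσ.2]
    rw [Real.norm_eq_abs] at hbound
    calc |∫ σ in b..c, (g σ + deriv F σ)| ≤ M * |c - b| := hbound
      _ ≤ M * ε := by
          apply mul_le_mul_of_nonneg_left _ hMnn
          rw [abs_of_nonpos (by linarith), neg_sub]
          linarith
      _ = ε * (2 * C₀) * (1 + |a| ^ p₀ + |b| ^ p₀) := by rw [hM]; ring
  · -- a = b
    subst hab
    simp only [sub_self, Real.sign_zero, zero_mul, intervalIntegral.integral_same, sub_zero,
      abs_zero]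
    apply mul_nonneg (mul_nonneg hε.le (by linarith))
    positivity
  · -- b < a
    set c : ℝ := min a (b + ε) with hc
    have hbc : b ≤ c := le_min hab.le (by linarith)
    have hca : c ≤ a := min_le_left _ _
    have hcb : c ≤ b + ε := min_le_right _ _
    have hsplit : (∫ σ in b..a, g σ) = (∫ σ in b..c, g σ) + ∫ σ in c..a, g σ :=
      (intervalIntegral.integral_add_adjacent_intervals (hgint b c) (hgint c a)).symm
    have htail : (∫ σ in c..a, g σ) = F a - F c := by
      rcases le_or_gt a (b + ε) with h | h
      · have hca' : c = a := min_eq_left h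
        rw [hca', intervalIntegral.integral_same]; simp
      · have hceq : c = b + ε := min_eq_right h.le
        have heq : (∫ σ in c..a, g σ) = ∫ σ in c..a, deriv F σ := by
          apply intervalIntegral.integral_congr
          intro σ hσ
          rw [Set.uIcc_of_le hca] at hσ
          have h1 : (1:ℝ) ≤ (σ - b) / ε := by
            rw [le_div_iff₀ hε]
            have : c ≤ σ := hσ.1
            rw [hceq] at this
            linarith
          show deriv β ((σ - b) / ε) * deriv F σ = deriv F σ
          rw [hdpos _ h1]; ring
        rw [heq, hFTC]
    have hkey : (∫ σ in b..a, g σ) - Real.sign (a - b) * (F a - F b)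
        = ∫ σ in b..c, (g σ - deriv F σ) := by
      rw [hsplit, htail, Real.sign_of_pos (by linarith : (0:ℝ) < a - b),
        intervalIntegral.integral_sub (hgint b c) (hF'int b c), hFTC]
      ring
    rw [hkey]
    have hbound : ‖∫ σ in b..c, (g σ - deriv F σ)‖ ≤ M * |c - b| := by
      apply intervalIntegral.norm_integral_le_of_norm_le_const
      intro σ hσ
      rw [Set.uIoc_of_le hbc] at hσ
      have he : g σ - deriv F σ = (deriv β ((σ - b) / ε) - 1) * deriv F σ := by
        show deriv β ((σ - b) / ε) * deriv F σ - deriv F σ = _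
        ring
      rw [Real.norm_eq_abs, he]
      apply hbd 1 (by norm_num) σ
      · have : min a b = b := min_eq_right hab.le
        linarith [hσ.1]
      · have : max a b = a := max_eq_left hab.le
        linarith [hσ.2]
    rw [Real.norm_eq_abs] at hbound
    calc |∫ σ in b..c, (g σ - deriv F σ)| ≤ M * |c - b| := hbound
      _ ≤ M * ε := by
          apply mul_le_mul_of_nonneg_left _ hMnn
          rw [abs_of_nonneg (by linarith)]
          linarith
      _ = ε * (2 * C₀) * (1 + |a| ^ p₀ + |b| ^ p₀) := by rw [hM]; ring
end

section
/- Let F ∈ C²(ℝ) with F' of polynomial growth and define the entropy flux difference F^{β_ε} as above. Then there exist C > 0 and p ∈ ℕ such that for all a, b ∈ ℝ: |F^{β_ε}(a,b) − F^{β_ε}(b,a)| ≤ C ε (1 + |a|^p + |b|^p). -/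
open Set intervalIntegral

/-- For the smooth convex approximation `β_ε (r) = ε β (r/ε)` of the absolute value and a
`C²` flux `F` with `F'` of polynomial growth, the entropy flux
`F^{β_ε}(a,b) = ∫_b^a β_ε'(σ - b) F'(σ) dσ` is almost symmetric:
`|F^{β_ε}(a,b) − F^{β_ε}(b,a)| ≤ C ε (1 + |a|^p + |b|^p)`. -/
theorem stmt3 (β : ℝ → ℝ)
    (hβC2 : ContDiff ℝ 2 β)
    (hβnn : ∀ r, 0 ≤ β r)
    (hβconv : ConvexOn ℝ Set.univ β)
    (hβ0 : β 0 = 0)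
    (hβeven : ∀ r, β (-r) = β r)
    (hdneg : ∀ r : ℝ, r ≤ -1 → deriv β r = -1)
    (hdpos : ∀ r : ℝ, 1 ≤ r → deriv β r = 1)
    (hdmid : ∀ r : ℝ, |r| ≤ 1 → |deriv β r| ≤ 1)
    (F : ℝ → ℝ) (hF : ContDiff ℝ 2 F)
    (C₀ : ℝ) (p₀ : ℕ) (hF' : ∀ r : ℝ, |deriv F r| ≤ C₀ * (1 + |r| ^ p₀)) :
    ∃ (C : ℝ) (p : ℕ), 0 < C ∧ ∀ ε : ℝ, 0 < ε → ∀ a b : ℝ,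
      |(∫ σ in b..a, deriv (fun s : ℝ => ε * β (s / ε)) (σ - b) * deriv F σ)
          - (∫ σ in a..b, deriv (fun s : ℝ => ε * β (s / ε)) (σ - a) * deriv F σ)|
        ≤ C * ε * (1 + |a| ^ p + |b| ^ p) := by
  have hβd : Differentiable ℝ β := hβC2.differentiable two_ne_zero
  have hβ'c : Continuous (deriv β) := hβC2.continuous_deriv one_le_two
  have hF'c : Continuous (deriv F) := hF.continuous_deriv one_le_two
  have hβ'le : ∀ r : ℝ, |deriv β r| ≤ 1 := by
    intro r
    by_cases h1 : r ≤ -1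
    · rw [hdneg r h1]; norm_num
    by_cases h2 : 1 ≤ r
    · rw [hdpos r h2]; norm_num
    · exact hdmid r (abs_le.2 ⟨by linarith, by linarith⟩)
  have hC₀ : 0 ≤ C₀ := by
    have h := hF' 0
    nlinarith [abs_nonneg (deriv F 0), pow_nonneg (abs_nonneg (0:ℝ)) p₀]
  refine ⟨4 * (C₀ + 1), p₀, by linarith, ?_⟩
  intro ε hε a b
  have hderiv : ∀ x : ℝ, deriv (fun s : ℝ => ε * β (s / ε)) x = deriv β (x / ε) := by
    intro x
    have h1 : HasDerivAt (fun s : ℝ => s / ε) (1 / ε) x := (hasDerivAt_id x).div_const ε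
    have h2 : HasDerivAt (fun s : ℝ => ε * β (s / ε))
        (ε * (deriv β (x / ε) * (1 / ε))) x :=
      (((hβd (x / ε)).hasDerivAt.comp x h1)).const_mul ε
    rw [h2.deriv]; field_simp
  simp only [hderiv]
  have key : ∀ a b : ℝ, b ≤ a →
      |(∫ σ in b..a, deriv β ((σ - b) / ε) * deriv F σ)
        - ∫ σ in a..b, deriv β ((σ - a) / ε) * deriv F σ|
        ≤ 4 * (C₀ + 1) * ε * (1 + |a| ^ p₀ + |b| ^ p₀) := by
    intro a b hba
    set M : ℝ := C₀ * (1 + |a| ^ p₀ + |b| ^ p₀) with hMdef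
    have hT1 : (1:ℝ) ≤ 1 + |a| ^ p₀ + |b| ^ p₀ := by
      nlinarith [pow_nonneg (abs_nonneg a) p₀, pow_nonneg (abs_nonneg b) p₀]
    have hM0 : 0 ≤ M := mul_nonneg hC₀ (by positivity)
    have hM4 : 4 * M ≤ 4 * (C₀ + 1) * (1 + |a| ^ p₀ + |b| ^ p₀) := by nlinarith
    set f : ℝ → ℝ := fun σ =>
      deriv β ((σ - b) / ε) * deriv F σ + deriv β ((σ - a) / ε) * deriv F σ with hfdef
    have hfc : Continuous f := by
      apply Continuous.add <;>
        exact (hβ'c.comp ((continuous_id.sub continuous_const).div_const ε)).mul hF'c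
    have hfint : ∀ x y : ℝ, IntervalIntegrable f MeasureTheory.volume x y :=
      fun x y => hfc.intervalIntegrable x y
    -- pointwise bound on [b, a]
    have hg : ∀ σ ∈ uIcc b a, |f σ| ≤ 2 * M := by
      intro σ hσ
      rw [uIcc_of_le hba] at hσ
      have hσp : |σ| ^ p₀ ≤ |a| ^ p₀ + |b| ^ p₀ := by
        have h1 : |σ| ≤ max |a| |b| := by
          rw [abs_le]
          constructor
          · have h := hσ.1; have := neg_abs_le b; have := le_max_right |a| |b|; linarith
          · have h := hσ.2; have := le_abs_self a; have := le_max_left |a| |b|; linarith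
        have h2 := pow_le_pow_left₀ (abs_nonneg σ) h1 p₀
        rcases max_cases |a| |b| with ⟨heq, _⟩ | ⟨heq, _⟩ <;> rw [heq] at h2 <;>
          nlinarith [pow_nonneg (abs_nonneg a) p₀, pow_nonneg (abs_nonneg b) p₀]
      have hF'σ : |deriv F σ| ≤ M := by
        refine (hF' σ).trans ?_
        rw [hMdef]; nlinarith
      have hsum : |deriv β ((σ - b) / ε) + deriv β ((σ - a) / ε)| ≤ 2 := by
        have := hβ'le ((σ - b) / ε); have := hβ'le ((σ - a) / ε)
        have := abs_add_le (deriv β ((σ - b) / ε)) (deriv β ((σ - a) / ε))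
        linarith
      have : f σ = (deriv β ((σ - b) / ε) + deriv β ((σ - a) / ε)) * deriv F σ := by
        rw [hfdef]; ring
      rw [this, abs_mul]
      exact mul_le_mul hsum hF'σ (abs_nonneg _) (by norm_num)
    -- rewrite the difference as a single integral of f
    have hcomb : (∫ σ in b..a, deriv β ((σ - b) / ε) * deriv F σ)
        - ∫ σ in a..b, deriv β ((σ - a) / ε) * deriv F σ = ∫ σ in b..a, f σ := by
      have hi1 : IntervalIntegrable (fun σ : ℝ => deriv β ((σ - b) / ε) * deriv F σ)
          MeasureTheory.volume b a := by
        apply Continuous.intervalIntegrable; fun_prop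
      have hi2 : IntervalIntegrable (fun σ : ℝ => deriv β ((σ - a) / ε) * deriv F σ)
          MeasureTheory.volume b a := by
        apply Continuous.intervalIntegrable; fun_prop
      rw [intervalIntegral.integral_symm b a, sub_neg_eq_add,
        ← intervalIntegral.integral_add hi1 hi2]
    rw [hcomb]
    rcases le_or_gt (a - b) (2 * ε) with hcase | hcase
    · -- short interval
      have hb := intervalIntegral.norm_integral_le_of_norm_le_const (C := 2 * M)
        (f := f) (a := b) (b := a)
        (fun x hx => by rw [Real.norm_eq_abs]; exact hg x (uIoc_subset_uIcc hx))
      rw [Real.norm_eq_abs] at hb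
      have hab : |a - b| ≤ 2 * ε := by rw [abs_of_nonneg (by linarith)]; exact hcase
      calc |∫ σ in b..a, f σ| ≤ 2 * M * |a - b| := hb
        _ ≤ 2 * M * (2 * ε) := by nlinarith
        _ ≤ 4 * (C₀ + 1) * ε * (1 + |a| ^ p₀ + |b| ^ p₀) := by nlinarith
    · -- long interval: split into three pieces
      have h1 : b ≤ b + ε := by linarith
      have h2 : b + ε ≤ a - ε := by linarith
      have h3 : a - ε ≤ a := by linarith
      have hs1 := intervalIntegral.integral_add_adjacent_intervals
        (hfint b (b + ε)) (hfint (b + ε) a)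
      have hs2 := intervalIntegral.integral_add_adjacent_intervals
        (hfint (b + ε) (a - ε)) (hfint (a - ε) a)
      have hmid : (∫ σ in (b + ε)..(a - ε), f σ) = 0 := by
        have : EqOn f (fun _ => (0:ℝ)) (uIcc (b + ε) (a - ε)) := by
          intro σ hσ
          rw [uIcc_of_le h2] at hσ
          have e1 : deriv β ((σ - b) / ε) = 1 :=
            hdpos _ ((one_le_div hε).2 (by linarith [hσ.1]))
          have e2 : deriv β ((σ - a) / ε) = -1 :=
            hdneg _ (by rw [div_le_iff₀ hε]; linarith [hσ.2])
          show f σ = 0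
          rw [hfdef]; simp only [e1, e2]; ring
        rw [intervalIntegral.integral_congr this]
        simp
      have hsub1 : uIcc b (b + ε) ⊆ uIcc b a :=
        uIcc_subset_uIcc left_mem_uIcc
          (by rw [uIcc_of_le hba]; exact ⟨by linarith, by linarith⟩)
      have hsub2 : uIcc (a - ε) a ⊆ uIcc b a :=
        uIcc_subset_uIcc
          (by rw [uIcc_of_le hba]; exact ⟨by linarith, by linarith⟩) right_mem_uIcc
      have hend1 : |∫ σ in b..(b + ε), f σ| ≤ 2 * M * ε := by
        have hb := intervalIntegral.norm_integral_le_of_norm_le_const (C := 2 * M)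
          (f := f) (a := b) (b := b + ε)
          (fun x hx => by
            rw [Real.norm_eq_abs]; exact hg x (hsub1 (uIoc_subset_uIcc hx)))
        rw [Real.norm_eq_abs] at hb
        have : |b + ε - b| = ε := by rw [show b + ε - b = ε by ring, abs_of_pos hε]
        rw [this] at hb
        exact hb
      have hend2 : |∫ σ in (a - ε)..a, f σ| ≤ 2 * M * ε := by
        have hb := intervalIntegral.norm_integral_le_of_norm_le_const (C := 2 * M)
          (f := f) (a := a - ε) (b := a)
          (fun x hx => by
            rw [Real.norm_eq_abs]; exact hg x (hsub2 (uIoc_subset_uIcc hx)))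
        rw [Real.norm_eq_abs] at hb
        have : |a - (a - ε)| = ε := by rw [show a - (a - ε) = ε by ring, abs_of_pos hε]
        rw [this] at hb
        exact hb
      have hsplit : (∫ σ in b..a, f σ)
          = (∫ σ in b..(b + ε), f σ) + (∫ σ in (a - ε)..a, f σ) := by
        rw [← hs1, ← hs2, hmid]; ring
      rw [hsplit]
      calc |(∫ σ in b..(b + ε), f σ) + (∫ σ in (a - ε)..a, f σ)|
          ≤ |∫ σ in b..(b + ε), f σ| + |∫ σ in (a - ε)..a, f σ| := abs_add_le _ _
        _ ≤ 2 * M * ε + 2 * M * ε := add_le_add hend1 hend2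
        _ ≤ 4 * (C₀ + 1) * ε * (1 + |a| ^ p₀ + |b| ^ p₀) := by nlinarith
  rcases le_total b a with h | h
  · exact key a b h
  · rw [abs_sub_comm]
    calc |(∫ σ in a..b, deriv β ((σ - a) / ε) * deriv F σ)
        - ∫ σ in b..a, deriv β ((σ - b) / ε) * deriv F σ|
        ≤ 4 * (C₀ + 1) * ε * (1 + |b| ^ p₀ + |a| ^ p₀) := key b a h
      _ = 4 * (C₀ + 1) * ε * (1 + |a| ^ p₀ + |b| ^ p₀) := by ring
end
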